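/- Let α, β, δ, λ be nonzero complex numbers such that Re(δ) = 0, δ² = −|β|², |α| = 1, and |λ|² = 1/(1 + |δ|²). Then λX₁ is a unitary matrix: (λX₁)(λX₁)† = I₈. -/

import Mathlib

set_option maxHeartbeats 4000000


open Matrix

@[simp] lemma X1aux_cons_val_five {α : Type*} {m : ℕ} (x : α) (u : Fin (m + 5) → α) :
    Matrix.vecCons x u 5 =
      Matrix.vecHead (Matrix.vecTail (Matrix.vecTail (Matrix.vecTail (Matrix.vecTail u)))) := rfl

@[simp] lemma X1aux_cons_val_six {α : Type*} {m : ℕ} (x : α) (u : Fin (m + 6) → α) :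
    Matrix.vecCons x u 6 =
      Matrix.vecHead (Matrix.vecTail (Matrix.vecTail (Matrix.vecTail
        (Matrix.vecTail (Matrix.vecTail u))))) := rfl

@[simp] lemma X1aux_cons_val_seven {α : Type*} {m : ℕ} (x : α) (u : Fin (m + 7) → α) :
    Matrix.vecCons x u 7 =
      Matrix.vecHead (Matrix.vecTail (Matrix.vecTail (Matrix.vecTail
        (Matrix.vecTail (Matrix.vecTail (Matrix.vecTail u)))))) := rfl

/-- The X-shaped matrix `X₁` with parameters `α, β, δ`. -/
noncomputable def X1 (α β δ : ℂ) : Matrix (Fin 8) (Fin 8) ℂ :=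
  !![δ, 0, 0, 0, 0, 0, 0, α * β ^ 2 / δ ^ 2;
     0, 1, 0, 0, 0, 0, β, 0;
     0, 0, δ, 0, 0, α, 0, 0;
     0, 0, 0, 1, δ ^ 2 / β, 0, 0, 0;
     0, 0, 0, β, 1, 0, 0, 0;
     0, 0, 1 / α, 0, 0, δ, 0, 0;
     0, δ ^ 2 / β, 0, 0, 0, 0, 1, 0;
     δ ^ 2 / (α * β ^ 2), 0, 0, 0, 0, 0, 0, δ]

/-- If `Re(δ) = 0`, `δ² = −|β|²`, `|α| = 1` and `|λ|² = 1/(1 + |δ|²)`, then `λ X₁` is a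
unitary matrix. -/
theorem X1_unitary (α β δ lam : ℂ) (hα : α ≠ 0) (hβ : β ≠ 0) (hδ : δ ≠ 0) (hlam : lam ≠ 0)
    (hre : δ.re = 0) (hδβ : δ ^ 2 = -((‖β‖ ^ 2 : ℝ) : ℂ))
    (habs : ‖α‖ = 1)
    (hl : ‖lam‖ ^ 2 = 1 / (1 + ‖δ‖ ^ 2)) :
    (lam • X1 α β δ) * (lam • X1 α β δ)ᴴ = (1 : Matrix (Fin 8) (Fin 8) ℂ) := by
  have hcδ : (starRingEnd ℂ) δ = -δ := by
    apply Complex.ext <;> simp [hre]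
  have hcβ : (starRingEnd ℂ) β = -δ ^ 2 / β := by
    have h : β * (starRingEnd ℂ) β = ((‖β‖ ^ 2 : ℝ) : ℂ) := by
      rw [Complex.mul_conj, Complex.normSq_eq_norm_sq]
    field_simp
    rw [mul_comm, h, hδβ]; ring
  have hcα : (starRingEnd ℂ) α = α⁻¹ := by
    have h : α * (starRingEnd ℂ) α = 1 := by
      rw [Complex.mul_conj, Complex.normSq_eq_norm_sq, habs]; norm_num
    field_simp
    linear_combination h
  have hδ2 : -δ ^ 2 = ((‖δ‖ ^ 2 : ℝ) : ℂ) := by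
    have : δ * (starRingEnd ℂ) δ = ((‖δ‖ ^ 2 : ℝ) : ℂ) := by
      rw [Complex.mul_conj, Complex.normSq_eq_norm_sq]
    rw [hcδ] at this; linear_combination this
  have h1 : (1 : ℂ) - δ ^ 2 ≠ 0 := by
    have h2 : (1 : ℂ) - δ ^ 2 = ((1 + ‖δ‖ ^ 2 : ℝ) : ℂ) := by
      push_cast at hδ2 ⊢; linear_combination hδ2
    rw [h2]
    exact_mod_cast ne_of_gt (by positivity : (0:ℝ) < 1 + ‖δ‖ ^ 2)
  have hclam : (starRingEnd ℂ) lam = ((1 - δ ^ 2) * lam)⁻¹ := by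
    have h : lam * (starRingEnd ℂ) lam = (1 - δ ^ 2)⁻¹ := by
      rw [Complex.mul_conj, Complex.normSq_eq_norm_sq, hl]
      push_cast at hδ2 ⊢
      rw [show (1:ℂ) + ‖δ‖ ^ 2 = 1 - δ ^ 2 by linear_combination -hδ2, one_div]
    field_simp at h ⊢
    linear_combination h
  have key : X1 α β δ * (X1 α β δ)ᴴ = (1 - δ ^ 2) • (1 : Matrix (Fin 8) (Fin 8) ℂ) := by
    ext i j
    fin_cases i <;> fin_cases j <;>
      simp [X1, Matrix.mul_apply, Fin.sum_univ_succ, Matrix.one_apply, Complex.star_def,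
        hcδ, hcβ, hcα] <;>
      (try ring_nf) <;> (try field_simp) <;> (try ring)
  have hsc : lam * (starRingEnd ℂ) lam * (1 - δ ^ 2) = 1 := by
    rw [hclam]
    field_simp
  rw [Matrix.conjTranspose_smul, Matrix.smul_mul, Matrix.mul_smul, key, smul_smul, smul_smul,
    RCLike.star_def, hsc, one_smul]
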